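/- arXiv:0906.0081 — 3 statements merged into one kernel-verified Lean document; each statement's English description precedes it below -/
import Mathlib

section
/- Let f(x,y) = x^5 + x^2y^2 + y^5 in ℂ[[x,y]], let u be the valuation given by u(x^{k_x}y^{k_y} monomials) via the linear form ℓ(k_x,k_y) = 2k_x + 3k_y (taking the minimum over the support), and let v be the induced order function on ℂ[[x,y]]/(f) defined by v(g) = sup over representatives g' of u(g'). Then v is not a valuation: v(x²) = 4 and v(x³+y²) = 6, but v(x²·(x³+y²)) = 15 ≠ 4 + 6. -/
open MvPowerSeries Finsupp

noncomputable def Fq : MvPowerSeries (Fin 2) ℂ := X 0 ^ 5 + X 0 ^ 2 * X 1 ^ 2 + X 1 ^ 5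

noncomputable def a50 : Fin 2 →₀ ℕ := single 0 5
noncomputable def a22 : Fin 2 →₀ ℕ := single 0 2 + single 1 2
noncomputable def a05 : Fin 2 →₀ ℕ := single 1 5

lemma a50_0 : a50 0 = 5 := by simp [a50]
lemma a50_1 : a50 1 = 0 := by simp [a50, Finsupp.single_apply]
lemma a22_0 : a22 0 = 2 := by simp [a22, Finsupp.single_apply]
lemma a22_1 : a22 1 = 2 := by simp [a22, Finsupp.single_apply]
lemma a05_0 : a05 0 = 0 := by simp [a05, Finsupp.single_apply]
lemma a05_1 : a05 1 = 5 := by simp [a05]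

lemma coeff_Fq (k : Fin 2 →₀ ℕ) : MvPowerSeries.coeff k Fq =
    (if k = a50 then 1 else 0) + (if k = a22 then 1 else 0) + (if k = a05 then 1 else 0) := by
  have : Fq = monomial a50 1 + monomial a22 1 + monomial a05 1 := by
    rw [Fq, X_pow_eq, X_pow_eq (R := ℂ) (0 : Fin 2) 2, X_pow_eq (R := ℂ) (1 : Fin 2) 2,
      X_pow_eq, monomial_mul_monomial, one_mul, a50, a22, a05]
  rw [this]
  simp [coeff_monomial]

lemma mem_supp_Fq {k : Fin 2 →₀ ℕ} (h : MvPowerSeries.coeff k Fq ≠ 0) :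
    k = a50 ∨ k = a22 ∨ k = a05 := by
  by_contra hc
  push_neg at hc
  rw [coeff_Fq, if_neg hc.1, if_neg hc.2.1, if_neg hc.2.2] at h
  simp at h

lemma lF {k : Fin 2 →₀ ℕ} (h : MvPowerSeries.coeff k Fq ≠ 0) :
    10 ≤ 2 * k 0 + 3 * k 1 := by
  rcases mem_supp_Fq h with rfl | rfl | rfl
  · rw [a50_0, a50_1]
  · rw [a22_0, a22_1]
  · rw [a05_0, a05_1]; norm_num

lemma lmul (h : MvPowerSeries (Fin 2) ℂ) {k : Fin 2 →₀ ℕ}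
    (hk : MvPowerSeries.coeff k (h * Fq) ≠ 0) : 10 ≤ 2 * k 0 + 3 * k 1 := by
  rw [MvPowerSeries.coeff_mul] at hk
  obtain ⟨p, hp, hne⟩ := Finset.exists_ne_zero_of_sum_ne_zero hk
  rw [Finset.HasAntidiagonal.mem_antidiagonal] at hp
  have h2 : MvPowerSeries.coeff p.2 Fq ≠ 0 := right_ne_zero_of_mul hne
  have := lF h2
  have e0 : p.1 0 + p.2 0 = k 0 := by rw [← hp]; rfl
  have e1 : p.1 1 + p.2 1 = k 1 := by rw [← hp]; rfl
  omega

lemma evadd (p : (Fin 2 →₀ ℕ) × (Fin 2 →₀ ℕ)) {k : Fin 2 →₀ ℕ} (hp : p.1 + p.2 = k)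
    (i : Fin 2) : p.1 i + p.2 i = k i := by rw [← hp]; rfl

lemma coeff_mul_F_05 (h : MvPowerSeries (Fin 2) ℂ) :
    MvPowerSeries.coeff a05 (h * Fq) = MvPowerSeries.coeff 0 h := by
  rw [MvPowerSeries.coeff_mul]
  have : ∑ p ∈ Finset.HasAntidiagonal.antidiagonal a05, (coeff p.1) h * (coeff p.2) Fq
      = (coeff (0 : Fin 2 →₀ ℕ)) h * (coeff a05) Fq := by
    refine Finset.sum_eq_single_of_mem ((0 : Fin 2 →₀ ℕ), a05)
      (by rw [Finset.HasAntidiagonal.mem_antidiagonal]; exact zero_add a05) ?_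
    rintro p hp hne
    show (coeff p.1) h * (coeff p.2) Fq = 0
    rw [Finset.HasAntidiagonal.mem_antidiagonal] at hp
    by_cases h2 : MvPowerSeries.coeff p.2 Fq = 0
    · rw [h2, mul_zero]
    · exfalso
      rcases mem_supp_Fq h2 with he | he | he
      · have := evadd p hp 0
        rw [he, a50_0, a05_0] at this; omega
      · have := evadd p hp 0
        rw [he, a22_0, a05_0] at this; omega
      · apply hne
        rw [he] at hp
        have : p.1 = 0 := add_right_cancel (b := a05) (by rw [zero_add]; exact hp)
        exact Prod.ext this he
  rw [this, coeff_Fq]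
  have h1 : a05 ≠ a50 := fun h => by have := congrArg (fun g => g 1) h; simp [a05_1, a50_1] at this
  have h2 : a05 ≠ a22 := fun h => by have := congrArg (fun g => g 1) h; simp [a05_1, a22_1] at this
  rw [if_neg h1, if_neg h2, if_pos rfl]
  ring

lemma coeff_mul_F_50 (h : MvPowerSeries (Fin 2) ℂ) :
    MvPowerSeries.coeff a50 (h * Fq) = MvPowerSeries.coeff 0 h := by
  rw [MvPowerSeries.coeff_mul]
  have : ∑ p ∈ Finset.HasAntidiagonal.antidiagonal a50, (coeff p.1) h * (coeff p.2) Fq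
      = (coeff (0 : Fin 2 →₀ ℕ)) h * (coeff a50) Fq := by
    refine Finset.sum_eq_single_of_mem ((0 : Fin 2 →₀ ℕ), a50)
      (by rw [Finset.HasAntidiagonal.mem_antidiagonal]; exact zero_add a50) ?_
    rintro p hp hne
    show (coeff p.1) h * (coeff p.2) Fq = 0
    rw [Finset.HasAntidiagonal.mem_antidiagonal] at hp
    by_cases h2 : MvPowerSeries.coeff p.2 Fq = 0
    · rw [h2, mul_zero]
    · exfalso
      rcases mem_supp_Fq h2 with he | he | he
      · apply hne
        rw [he] at hp
        have : p.1 = 0 := add_right_cancel (b := a50) (by rw [zero_add]; exact hp)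
        exact Prod.ext this he
      · have := evadd p hp 1
        rw [he, a22_1, a50_1] at this; omega
      · have := evadd p hp 1
        rw [he, a05_1, a50_1] at this; omega
  rw [this, coeff_Fq]
  have h1 : a50 ≠ a22 := fun h => by have := congrArg (fun g => g 0) h; simp [a50_0, a22_0] at this
  have h2 : a50 ≠ a05 := fun h => by have := congrArg (fun g => g 0) h; simp [a50_0, a05_0] at this
  rw [if_pos rfl, if_neg h1, if_neg h2]
  ring

lemma rep {g g' : MvPowerSeries (Fin 2) ℂ}
    (hgg : Ideal.Quotient.mk (Ideal.span {Fq}) g' = Ideal.Quotient.mk (Ideal.span {Fq}) g) :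
    ∃ c, g' = g + c * Fq := by
  obtain ⟨c, hc⟩ := Ideal.mem_span_singleton.mp (Ideal.Quotient.eq.mp hgg)
  exact ⟨c, by linear_combination hc⟩

noncomputable def Uu (g : MvPowerSeries (Fin 2) ℂ) : ℕ∞ :=
  ⨅ k : {k : Fin 2 →₀ ℕ // MvPowerSeries.coeff k g ≠ 0},
    ((2 * k.1 0 + 3 * k.1 1 : ℕ) : ℕ∞)

lemma key1 : (⨆ g' : {g' : MvPowerSeries (Fin 2) ℂ //
      Ideal.Quotient.mk (Ideal.span {Fq}) g' = Ideal.Quotient.mk (Ideal.span {Fq}) (X 0 ^ 2)},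
    Uu g'.1) = 4 := by
  apply le_antisymm
  · apply iSup_le
    rintro ⟨g', hg'⟩
    obtain ⟨c, rfl⟩ := rep hg'
    have hcf : MvPowerSeries.coeff (single 0 2) (c * Fq) = 0 := by
      by_contra hh
      have := lmul c hh
      simp [Finsupp.single_apply] at this
    have hk : MvPowerSeries.coeff (single 0 2) (X 0 ^ 2 + c * Fq) ≠ 0 := by
      rw [map_add, coeff_X_pow, if_pos rfl, hcf, add_zero]
      norm_num
    refine le_trans (iInf_le (ι := {k : Fin 2 →₀ ℕ // MvPowerSeries.coeff k _ ≠ 0}) _ ⟨single 0 2, hk⟩) ?_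
    simp [Finsupp.single_apply]
  · refine le_trans ?_ (le_iSup _ ⟨X 0 ^ 2, rfl⟩)
    apply le_iInf
    rintro ⟨k, hk⟩
    have hk2 : k = single 0 2 := by
      by_contra h; rw [coeff_X_pow, if_neg h] at hk; exact hk rfl
    subst hk2
    simp [Finsupp.single_apply]

lemma key2 : (⨆ g' : {g' : MvPowerSeries (Fin 2) ℂ //
      Ideal.Quotient.mk (Ideal.span {Fq}) g' =
        Ideal.Quotient.mk (Ideal.span {Fq}) (X 0 ^ 3 + X 1 ^ 2)},
    Uu g'.1) = 6 := by
  have hne : (single 1 2 : Fin 2 →₀ ℕ) ≠ single 0 3 := by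
    intro h
    have := congrArg (fun g => g (0 : Fin 2)) h
    simp [Finsupp.single_apply] at this
  apply le_antisymm
  · apply iSup_le
    rintro ⟨g', hg'⟩
    obtain ⟨c, rfl⟩ := rep hg'
    have hcf : MvPowerSeries.coeff (single 1 2) (c * Fq) = 0 := by
      by_contra hh
      have := lmul c hh
      simp [Finsupp.single_apply] at this
    have hk : MvPowerSeries.coeff (single 1 2) (X 0 ^ 3 + X 1 ^ 2 + c * Fq) ≠ 0 := by
      rw [map_add, map_add, coeff_X_pow, coeff_X_pow, if_pos rfl, if_neg hne, hcf,
        add_zero, zero_add]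
      norm_num
    refine le_trans (iInf_le _ ⟨single 1 2, hk⟩) ?_
    simp [Finsupp.single_apply]
  · refine le_trans ?_ (le_iSup _ ⟨X 0 ^ 3 + X 1 ^ 2, rfl⟩)
    apply le_iInf
    rintro ⟨k, hk⟩
    rw [map_add, coeff_X_pow, coeff_X_pow] at hk
    rcases eq_or_ne k (single 0 3) with rfl | h3
    · simp [Finsupp.single_apply]
    rcases eq_or_ne k (single 1 2) with rfl | h2
    · simp [Finsupp.single_apply]
    rw [if_neg h3, if_neg h2, add_zero] at hk
    exact absurd rfl hk

lemma key3 : (⨆ g' : {g' : MvPowerSeries (Fin 2) ℂ //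
      Ideal.Quotient.mk (Ideal.span {Fq}) g' =
        Ideal.Quotient.mk (Ideal.span {Fq}) (X 0 ^ 2 * (X 0 ^ 3 + X 1 ^ 2))},
    Uu g'.1) = 15 := by
  apply le_antisymm
  · apply iSup_le
    rintro ⟨g', hg'⟩
    obtain ⟨c, rfl⟩ := rep hg'
    have hrw : X 0 ^ 2 * (X 0 ^ 3 + X 1 ^ 2) + c * Fq = -(X 1 ^ 5) + (c + 1) * Fq := by
      rw [Fq]; ring
    rw [congrArg Uu hrw]
    by_cases hc : MvPowerSeries.coeff 0 (c + 1) = 1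
    · have hk : MvPowerSeries.coeff a50 (-(X 1 ^ 5) + (c + 1) * Fq) ≠ 0 := by
        have h1 : a50 ≠ single 1 5 := by
          intro h
          have := congrArg (fun g => g (0 : Fin 2)) h
          simp [a50, Finsupp.single_apply] at this
        rw [map_add, map_neg, coeff_X_pow, if_neg h1, neg_zero, zero_add, coeff_mul_F_50, hc]
        norm_num
      refine le_trans (iInf_le _ ⟨a50, hk⟩) ?_
      rw [a50_0, a50_1]
      norm_num
    · have hk : MvPowerSeries.coeff a05 (-(X 1 ^ 5) + (c + 1) * Fq) ≠ 0 := by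
        rw [map_add, map_neg, coeff_X_pow, if_pos (show a05 = single 1 5 from rfl), coeff_mul_F_05]
        intro h
        exact hc (by linear_combination h)
      refine le_trans (iInf_le _ ⟨a05, hk⟩) ?_
      rw [a05_0, a05_1]
      norm_num
  · have hmem : Ideal.Quotient.mk (Ideal.span {Fq}) (-(X 1 ^ 5) : MvPowerSeries (Fin 2) ℂ) =
        Ideal.Quotient.mk (Ideal.span {Fq}) (X 0 ^ 2 * (X 0 ^ 3 + X 1 ^ 2)) := by
      rw [Ideal.Quotient.eq]
      exact Ideal.mem_span_singleton.mpr ⟨-1, by rw [Fq]; ring⟩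
    refine le_trans ?_ (le_iSup _ ⟨-(X 1 ^ 5), hmem⟩)
    apply le_iInf
    rintro ⟨k, hk⟩
    rw [map_neg, coeff_X_pow] at hk
    have hk2 : k = single 1 5 := by
      by_contra h; rw [if_neg h, neg_zero] at hk; exact hk rfl
    subst hk2
    simp [Finsupp.single_apply]

lemma key4 : (⨆ g' : {g' : MvPowerSeries (Fin 2) ℂ //
      Ideal.Quotient.mk (Ideal.span {Fq}) g' =
        Ideal.Quotient.mk (Ideal.span {Fq}) (X 0 ^ 2 * (X 0 ^ 3 + X 1 ^ 2))}, Uu g'.1) ≠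
    (⨆ g' : {g' : MvPowerSeries (Fin 2) ℂ //
      Ideal.Quotient.mk (Ideal.span {Fq}) g' =
        Ideal.Quotient.mk (Ideal.span {Fq}) (X 0 ^ 2)}, Uu g'.1) +
    (⨆ g' : {g' : MvPowerSeries (Fin 2) ℂ //
      Ideal.Quotient.mk (Ideal.span {Fq}) g' =
        Ideal.Quotient.mk (Ideal.span {Fq}) (X 0 ^ 3 + X 1 ^ 2)}, Uu g'.1) := by
  rw [key1, key2, key3]
  decide

/-- For `f = x⁵ + x²y² + y⁵`, the order function `v` induced on
`ℂ[[x,y]]/(f)` by the valuation `u` of the linear form `ℓ(k_x,k_y) = 2k_x + 3k_y`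
is not a valuation: `v(x²) = 4`, `v(x³+y²) = 6`, but `v(x²·(x³+y²)) = 15 ≠ 4 + 6`. -/
theorem newton_order_function_not_valuation :
    let f : MvPowerSeries (Fin 2) ℂ := X 0 ^ 5 + X 0 ^ 2 * X 1 ^ 2 + X 1 ^ 5
    let u : MvPowerSeries (Fin 2) ℂ → ℕ∞ := fun g =>
      ⨅ k : {k : Fin 2 →₀ ℕ // MvPowerSeries.coeff k g ≠ 0},
        ((2 * k.1 0 + 3 * k.1 1 : ℕ) : ℕ∞)
    let v : (MvPowerSeries (Fin 2) ℂ ⧸ Ideal.span {f}) → ℕ∞ := fun g =>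
      ⨆ g' : {g' : MvPowerSeries (Fin 2) ℂ // Ideal.Quotient.mk (Ideal.span {f}) g' = g},
        u g'.1
    let π := Ideal.Quotient.mk (Ideal.span {f})
    v (π (X 0 ^ 2)) = 4 ∧
    v (π (X 0 ^ 3 + X 1 ^ 2)) = 6 ∧
    v (π (X 0 ^ 2 * (X 0 ^ 3 + X 1 ^ 2))) = 15 ∧
    v (π (X 0 ^ 2 * (X 0 ^ 3 + X 1 ^ 2))) ≠ v (π (X 0 ^ 2)) + v (π (X 0 ^ 3 + X 1 ^ 2)) := by
  intro f u v π
  exact ⟨key1, key2, key3, key4⟩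
end

section
/- Let {J(v)}_{v ∈ ℤ^s} be a decreasing multi-index filtration of a ℂ-vector space by subspaces (J(v') ⊆ J(v) whenever v' ≥ v componentwise), with all quotients J(v)/J(v+1) finite dimensional, where 1 = (1,…,1). Then the coefficient of t^v in L(t)·∏_{i=1}^s(t_i − 1)/(t_1⋯t_s − 1), where L(t) = Σ_v dim(J(v)/J(v+1)) t^v, equals Σ_{I ⊆ {1,…,s}} (−1)^{#I} dim( J(v + 1_I)/J(v+1) ), where 1_I ∈ {0,1}^s is the indicator vector of I. -/
/-- The dimension of the "quotient" `W₁/W₂` of two subspaces (intended for `W₂ ⊆ W₁`). -/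
noncomputable def relDim {V : Type*} [AddCommGroup V] [Module ℂ V]
    (W₁ W₂ : Submodule ℂ V) : ℕ :=
  Module.finrank ℂ (↥W₁ ⧸ (W₂.comap W₁.subtype))

lemma relDim_self {V : Type*} [AddCommGroup V] [Module ℂ V] (W : Submodule ℂ V) :
    relDim W W = 0 := by
  unfold relDim
  rw [Submodule.comap_subtype_self]
  have : Subsingleton (↥W ⧸ (⊤ : Submodule ℂ ↥W)) := Submodule.Quotient.subsingleton_iff.mpr rfl
  exact Module.finrank_zero_of_subsingleton

lemma relDim_add {V : Type*} [AddCommGroup V] [Module ℂ V]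
    (W₁ W₂ W₃ : Submodule ℂ V) (h32 : W₃ ≤ W₂) (h21 : W₂ ≤ W₁)
    (hfd : FiniteDimensional ℂ (↥W₁ ⧸ (W₃.comap W₁.subtype))) :
    relDim W₁ W₃ = relDim W₁ W₂ + relDim W₂ W₃ := by
  classical
  set p₃ := W₃.comap W₁.subtype with hp₃
  set p₂ := W₂.comap W₁.subtype with hp₂
  have hp : p₃ ≤ p₂ := Submodule.comap_mono h32
  have e1 : ((↥W₁ ⧸ p₃) ⧸ (p₂.map p₃.mkQ)) ≃ₗ[ℂ] (↥W₁ ⧸ p₂) :=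
    Submodule.quotientQuotientEquivQuotient p₃ p₂ hp
  set φ : ↥W₂ →ₗ[ℂ] (↥W₁ ⧸ p₃) := p₃.mkQ ∘ₗ Submodule.inclusion h21 with hφ
  have hker : LinearMap.ker φ = W₃.comap W₂.subtype := by
    ext x
    simp [hφ, hp₃, Submodule.Quotient.mk_eq_zero, Submodule.inclusion]
  have hrange : LinearMap.range φ = p₂.map p₃.mkQ := by
    rw [hφ, LinearMap.range_comp, Submodule.range_inclusion]
  have e2 : (↥W₂ ⧸ W₃.comap W₂.subtype) ≃ₗ[ℂ] ↥(p₂.map p₃.mkQ) := by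
    rw [← hker, ← hrange]; exact φ.quotKerEquivRange
  have key := Submodule.finrank_quotient_add_finrank (R := ℂ) (p₂.map p₃.mkQ)
  unfold relDim
  rw [e1.finrank_eq, e2.symm.finrank_eq] at key
  rw [← hp₃, ← hp₂]
  omega

/-- For a decreasing multi-index filtration `{J(v)}` with finite-dimensional
quotients `J(v)/J(v+1)`, the coefficient at `t^v` of
`L(t)·∏ᵢ(tᵢ−1)/(t₁⋯t_s−1)`, where `L(t) = Σ_v dim(J(v)/J(v+1)) t^v`, equals the
alternating sum `A(v) = Σ_{I⊆{1,…,s}} (−1)^{#I} dim(J(v+1_I)/J(v+1))`; as an identity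
of coefficients this says `A(v−1) − A(v)` (the `t^v`-coefficient of `A(t)·(t₁⋯t_s−1)`)
equals `Σ_I (−1)^{s−#I} L(v−1_I)` (the `t^v`-coefficient of `L(t)·∏ᵢ(tᵢ−1)`). -/
theorem poincare_series_coefficient_formula (s : ℕ) {V : Type*} [AddCommGroup V]
    [Module ℂ V] (J : (Fin s → ℤ) → Submodule ℂ V)
    (hdec : ∀ v v' : Fin s → ℤ, v ≤ v' → J v' ≤ J v)
    (hfin : ∀ v : Fin s → ℤ,
      FiniteDimensional ℂ (↥(J v) ⧸ ((J (v + 1)).comap (J v).subtype)))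
    (ind : Finset (Fin s) → (Fin s → ℤ))
    (hind : ∀ I i, ind I i = if i ∈ I then 1 else 0)
    (A L : (Fin s → ℤ) → ℤ)
    (hA : ∀ v, A v = ∑ I : Finset (Fin s),
      (-1 : ℤ) ^ I.card * relDim (J (v + ind I)) (J (v + 1)))
    (hL : ∀ v, L v = relDim (J v) (J (v + 1))) :
    ∀ v : Fin s → ℤ,
      A (v - 1) - A v =
        ∑ I : Finset (Fin s), (-1 : ℤ) ^ (s - I.card) * L (v - ind I) := by
  classical
  intro v
  set w : Fin s → ℤ := v - 1 with hw
  have hwv : w + 1 = v := by rw [hw]; ring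
  have hind_nonneg : ∀ K : Finset (Fin s), (0 : Fin s → ℤ) ≤ ind K := by
    intro K i
    rw [hind]
    split <;> norm_num
  have hind_le_one : ∀ K : Finset (Fin s), ind K ≤ (1 : Fin s → ℤ) := by
    intro K i
    rw [hind]
    split <;> norm_num
  -- key splitting identities
  have key1 : ∀ K : Finset (Fin s),
      (relDim (J (w + ind K)) (J (w + ind K + 1)) : ℤ)
        = (relDim (J (w + ind K)) (J (w + 1)) : ℤ)
          + (relDim (J (w + 1)) (J (w + 1 + ind K)) : ℤ) := by
    intro K
    have hi : w + ind K + 1 = w + 1 + ind K := by ring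
    have hfd := hfin (w + ind K)
    rw [hi] at hfd ⊢
    have h32 : J (w + 1 + ind K) ≤ J (w + 1) :=
      hdec _ _ (le_add_of_nonneg_right (hind_nonneg K))
    have h21 : J (w + 1) ≤ J (w + ind K) :=
      hdec _ _ (add_le_add_right (hind_le_one K) w)
    exact_mod_cast congrArg (Nat.cast (R := ℤ))
      (relDim_add (J (w + ind K)) (J (w + 1)) (J (w + 1 + ind K)) h32 h21 hfd)
  have key2 : ∀ I : Finset (Fin s),
      (relDim (J (w + 1)) (J (w + 1 + ind I)) : ℤ)
        = (relDim (J (w + 1)) (J (w + 1 + 1)) : ℤ)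
          - (relDim (J (w + 1 + ind I)) (J (w + 1 + 1)) : ℤ) := by
    intro I
    have h32 : J (w + 1 + 1) ≤ J (w + 1 + ind I) :=
      hdec _ _ (add_le_add_right (hind_le_one I) (w + 1))
    have h21 : J (w + 1 + ind I) ≤ J (w + 1) :=
      hdec _ _ (le_add_of_nonneg_right (hind_nonneg I))
    have h := relDim_add (J (w + 1)) (J (w + 1 + ind I)) (J (w + 1 + 1)) h32 h21 (hfin (w + 1))
    rw [h]
    push_cast
    ring
  -- reindex the right-hand side by complements
  have reindex : ∑ I : Finset (Fin s), (-1 : ℤ) ^ (s - I.card) * L (v - ind I)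
      = ∑ K : Finset (Fin s), (-1 : ℤ) ^ K.card * L (w + ind K) := by
    refine Fintype.sum_bijective compl
      (Function.Involutive.bijective fun I => compl_compl I) _ _ (fun I => ?_)
    have hcard : Iᶜ.card = s - I.card := by
      rw [Finset.card_compl, Fintype.card_fin]
    have harg : v - ind I = w + ind Iᶜ := by
      funext i
      simp only [Pi.sub_apply, Pi.add_apply, hind, hw, Pi.one_apply, Finset.mem_compl]
      by_cases h : i ∈ I <;> simp [h]
    rw [hcard, harg]
  rw [reindex]
  have step : ∀ K : Finset (Fin s),
      (-1 : ℤ) ^ K.card * L (w + ind K)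
        = (-1 : ℤ) ^ K.card * (relDim (J (w + ind K)) (J (w + 1)) : ℤ)
          + (-1 : ℤ) ^ K.card * (relDim (J (w + 1)) (J (w + 1 + 1)) : ℤ)
          - (-1 : ℤ) ^ K.card * (relDim (J (w + 1 + ind K)) (J (w + 1 + 1)) : ℤ) := by
    intro K
    rw [hL, key1, key2]
    ring
  rw [Finset.sum_congr rfl (fun K _ => step K)]
  have hsum0 : ∑ K : Finset (Fin s),
      (-1 : ℤ) ^ K.card * (relDim (J (w + 1)) (J (w + 1 + 1)) : ℤ) = 0 := by
    rcases Nat.eq_zero_or_pos s with hs | hs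
    · subst hs
      have h11 : w + 1 = w + 1 + 1 := funext fun i => i.elim0
      rw [← h11, relDim_self]
      simp
    · rw [← Finset.sum_mul, ← Finset.powerset_univ, Finset.sum_powerset_neg_one_pow_card]
      have : (Finset.univ : Finset (Fin s)) ≠ ∅ := by
        simp [Finset.univ_eq_empty_iff, Fin.pos_iff_nonempty.mp hs]
      rw [if_neg this]
      ring
  rw [Finset.sum_sub_distrib, Finset.sum_add_distrib, hsum0]
  have hAw : A w = ∑ K : Finset (Fin s),
      (-1 : ℤ) ^ K.card * (relDim (J (w + ind K)) (J (w + 1)) : ℤ) := hA w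
  have hAw1 : A (w + 1) = ∑ K : Finset (Fin s),
      (-1 : ℤ) ^ K.card * (relDim (J (w + 1 + ind K)) (J (w + 1 + 1)) : ℤ) := hA (w + 1)
  rw [← hAw, ← hAw1, hwv]
  ring
end

section
/- There exists a decreasing multi-index filtration {J(v)} of a ℂ-vector space with finite-dimensional quotients whose Poincaré series has a negative coefficient; explicitly, for a 17-dimensional space V with four subspaces W_0, W_1, W_2, W_3 given (in coordinates a_{500}, a_{410}, a_{320}, a_{230}, a_{140}, a_{050}, a_{401}, a_{302}, a_{203}, a_{104}, a_{041}, a_{032}, a_{023}, a_{014}, a_{211}, a_{121}, a_{112}) by W_0 = {a_{211}=a_{121}=a_{112}}, W_1 = {a_{050}=a_{041}=a_{032}=a_{023}=a_{014}=a_{121}=a_{112}=0}, W_2 = {a_{500}=a_{401}=a_{302}=a_{203}=a_{104}=a_{211}=a_{112}=0}, W_3 = {a_{500}=a_{410}=a_{320}=a_{230}=a_{140}=a_{050}=a_{211}=a_{121}=0}, the alternating sum Σ_{I ⊆ {0,1,2,3}} (−1)^{#I} dim(∩_{i∈I} W_i) equals −1. -/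
open LinearMap Module
set_option maxHeartbeats 2000000

noncomputable abbrev Csub (S : Finset (Fin 17)) : Submodule ℂ (Fin 17 → ℂ) :=
  ⨅ i ∈ S, LinearMap.ker (LinearMap.proj (R := ℂ) (φ := fun _ : Fin 17 => ℂ) i)

lemma finrank_coord (S : Finset (Fin 17)) : finrank ℂ ↥(Csub S) = 17 - S.card := by
  have h1 : Csub S
      = LinearMap.ker (LinearMap.pi (fun i : S => LinearMap.proj (R := ℂ) (φ := fun _ : Fin 17 => ℂ) (i : Fin 17))) := by
    rw [LinearMap.ker_pi]
    exact iInf_subtype'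
  have hsurj : Function.Surjective (LinearMap.pi (fun i : S => LinearMap.proj (R := ℂ) (φ := fun _ : Fin 17 => ℂ) (i : Fin 17))) := by
    intro y
    refine ⟨fun j => if h : j ∈ S then y ⟨j, h⟩ else 0, ?_⟩
    funext i
    simp [LinearMap.pi_apply]
  have h2 := LinearMap.finrank_range_add_finrank_ker (LinearMap.pi (fun i : S => LinearMap.proj (R := ℂ) (φ := fun _ : Fin 17 => ℂ) (i : Fin 17)))
  rw [LinearMap.range_eq_top.mpr hsurj, finrank_top] at h2
  simp [Module.finrank_pi, Fintype.card_coe] at h2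
  rw [h1]
  have hle : S.card ≤ 17 := by simpa using S.card_le_univ
  omega

lemma finrank_W0 :
    finrank ℂ ↥(LinearMap.ker ((LinearMap.proj 14 : (Fin 17 → ℂ) →ₗ[ℂ] ℂ) - LinearMap.proj 15)
      ⊓ LinearMap.ker ((LinearMap.proj 15 : (Fin 17 → ℂ) →ₗ[ℂ] ℂ) - LinearMap.proj 16)) = 15 := by
  set f : (Fin 17 → ℂ) →ₗ[ℂ] ℂ × ℂ :=
    ((LinearMap.proj 14 : (Fin 17 → ℂ) →ₗ[ℂ] ℂ) - LinearMap.proj 15).prod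
      ((LinearMap.proj 15 : (Fin 17 → ℂ) →ₗ[ℂ] ℂ) - LinearMap.proj 16) with hf
  have hker : LinearMap.ker ((LinearMap.proj 14 : (Fin 17 → ℂ) →ₗ[ℂ] ℂ) - LinearMap.proj 15)
      ⊓ LinearMap.ker ((LinearMap.proj 15 : (Fin 17 → ℂ) →ₗ[ℂ] ℂ) - LinearMap.proj 16)
      = LinearMap.ker f := (LinearMap.ker_prod _ _).symm
  have hsurj : Function.Surjective f := by
    intro y
    refine ⟨fun j => if j = 14 then y.1 + y.2 else if j = 15 then y.2 else 0, ?_⟩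
    simp [hf, LinearMap.prod_apply]
  have h2 := LinearMap.finrank_range_add_finrank_ker f
  rw [LinearMap.range_eq_top.mpr hsurj, finrank_top] at h2
  simp [Module.finrank_pi] at h2
  rw [hker]
  omega



/-- In the 17-dimensional space with coordinates
`a₅₀₀,a₄₁₀,a₃₂₀,a₂₃₀,a₁₄₀,a₀₅₀,a₄₀₁,a₃₀₂,a₂₀₃,a₁₀₄,a₀₄₁,a₀₃₂,a₀₂₃,a₀₁₄,a₂₁₁,a₁₂₁,a₁₁₂`
(indexed here by `0,…,16` in this order), for the four subspaces
`W₀ = {a₂₁₁ = a₁₂₁ = a₁₁₂}`,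
`W₁ = {a₀₅₀ = a₀₄₁ = a₀₃₂ = a₀₂₃ = a₀₁₄ = a₁₂₁ = a₁₁₂ = 0}`,
`W₂ = {a₅₀₀ = a₄₀₁ = a₃₀₂ = a₂₀₃ = a₁₀₄ = a₂₁₁ = a₁₁₂ = 0}`,
`W₃ = {a₅₀₀ = a₄₁₀ = a₃₂₀ = a₂₃₀ = a₁₄₀ = a₀₅₀ = a₂₁₁ = a₁₂₁ = 0}`,
the alternating sum `Σ_{I ⊆ {0,1,2,3}} (−1)^{#I} dim(∩_{i∈I} W_i)` equals `−1`
(so a Poincaré series of a filtration can have a negative coefficient). -/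
theorem alternating_sum_of_dims_eq_neg_one :
    let pr : Fin 17 → ((Fin 17 → ℂ) →ₗ[ℂ] ℂ) := fun i => LinearMap.proj i
    let W : Fin 4 → Submodule ℂ (Fin 17 → ℂ) :=
      ![LinearMap.ker (pr 14 - pr 15) ⊓ LinearMap.ker (pr 15 - pr 16),
        ⨅ i ∈ ({5, 10, 11, 12, 13, 15, 16} : Finset (Fin 17)), LinearMap.ker (pr i),
        ⨅ i ∈ ({0, 6, 7, 8, 9, 14, 16} : Finset (Fin 17)), LinearMap.ker (pr i),
        ⨅ i ∈ ({0, 1, 2, 3, 4, 5, 14, 15} : Finset (Fin 17)), LinearMap.ker (pr i)]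
    ∑ I : Finset (Fin 4),
      (-1 : ℤ) ^ I.card * (Module.finrank ℂ ↥(⨅ i ∈ I, W i) : ℤ) = -1 := by
  intro pr W
  have hW0 : W 0 = LinearMap.ker ((LinearMap.proj 14 : (Fin 17 → ℂ) →ₗ[ℂ] ℂ) - LinearMap.proj 15)
      ⊓ LinearMap.ker ((LinearMap.proj 15 : (Fin 17 → ℂ) →ₗ[ℂ] ℂ) - LinearMap.proj 16) := rfl
  have hW1 : W 1 = Csub {5, 10, 11, 12, 13, 15, 16} := rfl
  have hW2 : W 2 = Csub {0, 6, 7, 8, 9, 14, 16} := rfl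
  have hW3 : W 3 = Csub {0, 1, 2, 3, 4, 5, 14, 15} := rfl
  -- W0 combined with each Wi is a coordinate subspace
  have E01 : W 0 ⊓ W 1 = Csub {5, 10, 11, 12, 13, 14, 15, 16} := by
    rw [hW0, hW1]
    ext x
    simp only [Csub, Submodule.mem_inf, Submodule.mem_iInf, LinearMap.mem_ker,
      LinearMap.sub_apply, LinearMap.proj_apply, Finset.mem_insert, Finset.mem_singleton,
      forall_eq_or_imp, forall_eq, sub_eq_zero]
    constructor
    · rintro ⟨⟨h1, h2⟩, h⟩; simp_all
    · rintro h; simp_all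
  have E02 : W 0 ⊓ W 2 = Csub {0, 6, 7, 8, 9, 14, 15, 16} := by
    rw [hW0, hW2]
    ext x
    simp only [Csub, Submodule.mem_inf, Submodule.mem_iInf, LinearMap.mem_ker,
      LinearMap.sub_apply, LinearMap.proj_apply, Finset.mem_insert, Finset.mem_singleton,
      forall_eq_or_imp, forall_eq, sub_eq_zero]
    constructor
    · rintro ⟨⟨h1, h2⟩, h⟩; simp_all
    · rintro h; simp_all
  have E03 : W 0 ⊓ W 3 = Csub {0, 1, 2, 3, 4, 5, 14, 15, 16} := by
    rw [hW0, hW3]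
    ext x
    simp only [Csub, Submodule.mem_inf, Submodule.mem_iInf, LinearMap.mem_ker,
      LinearMap.sub_apply, LinearMap.proj_apply, Finset.mem_insert, Finset.mem_singleton,
      forall_eq_or_imp, forall_eq, sub_eq_zero]
    constructor
    · rintro ⟨⟨h1, h2⟩, h⟩; simp_all
    · rintro h; simp_all
  have union : ∀ S T : Finset (Fin 17), Csub S ⊓ Csub T = Csub (S ∪ T) :=
    fun S T => (Finset.iInf_union).symm
  -- finrank values for each subset
  have c_e : (finrank ℂ ↥(⨅ i ∈ (∅ : Finset (Fin 4)), W i) : ℤ) = 17 := by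
    rw [show (⨅ i ∈ (∅ : Finset (Fin 4)), W i) = ⊤ by simp]
    rw [finrank_top]
    simp [Module.finrank_pi]
  have c0 : (finrank ℂ ↥(⨅ i ∈ ({0} : Finset (Fin 4)), W i) : ℤ) = 15 := by
    rw [Finset.iInf_singleton, hW0, finrank_W0]; norm_num
  have c1 : (finrank ℂ ↥(⨅ i ∈ ({1} : Finset (Fin 4)), W i) : ℤ) = 10 := by
    rw [Finset.iInf_singleton, hW1, finrank_coord]; decide
  have c2 : (finrank ℂ ↥(⨅ i ∈ ({2} : Finset (Fin 4)), W i) : ℤ) = 10 := by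
    rw [Finset.iInf_singleton, hW2, finrank_coord]; decide
  have c3 : (finrank ℂ ↥(⨅ i ∈ ({3} : Finset (Fin 4)), W i) : ℤ) = 9 := by
    rw [Finset.iInf_singleton, hW3, finrank_coord]; decide
  have c01 : (finrank ℂ ↥(⨅ i ∈ ({0, 1} : Finset (Fin 4)), W i) : ℤ) = 9 := by
    rw [Finset.iInf_insert, Finset.iInf_singleton, E01, finrank_coord]; decide
  have c02 : (finrank ℂ ↥(⨅ i ∈ ({0, 2} : Finset (Fin 4)), W i) : ℤ) = 9 := by
    rw [Finset.iInf_insert, Finset.iInf_singleton, E02, finrank_coord]; decide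
  have c03 : (finrank ℂ ↥(⨅ i ∈ ({0, 3} : Finset (Fin 4)), W i) : ℤ) = 8 := by
    rw [Finset.iInf_insert, Finset.iInf_singleton, E03, finrank_coord]; decide
  have c12 : (finrank ℂ ↥(⨅ i ∈ ({1, 2} : Finset (Fin 4)), W i) : ℤ) = 4 := by
    rw [Finset.iInf_insert, Finset.iInf_singleton, hW1, hW2, union, finrank_coord]; decide
  have c13 : (finrank ℂ ↥(⨅ i ∈ ({1, 3} : Finset (Fin 4)), W i) : ℤ) = 4 := by
    rw [Finset.iInf_insert, Finset.iInf_singleton, hW1, hW3, union, finrank_coord]; decide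
  have c23 : (finrank ℂ ↥(⨅ i ∈ ({2, 3} : Finset (Fin 4)), W i) : ℤ) = 4 := by
    rw [Finset.iInf_insert, Finset.iInf_singleton, hW2, hW3, union, finrank_coord]; decide
  have c012 : (finrank ℂ ↥(⨅ i ∈ ({0, 1, 2} : Finset (Fin 4)), W i) : ℤ) = 4 := by
    rw [Finset.iInf_insert, Finset.iInf_insert, Finset.iInf_singleton, ← inf_assoc,
      E01, hW2, union, finrank_coord]; decide
  have c013 : (finrank ℂ ↥(⨅ i ∈ ({0, 1, 3} : Finset (Fin 4)), W i) : ℤ) = 4 := by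
    rw [Finset.iInf_insert, Finset.iInf_insert, Finset.iInf_singleton, ← inf_assoc,
      E01, hW3, union, finrank_coord]; decide
  have c023 : (finrank ℂ ↥(⨅ i ∈ ({0, 2, 3} : Finset (Fin 4)), W i) : ℤ) = 4 := by
    rw [Finset.iInf_insert, Finset.iInf_insert, Finset.iInf_singleton, ← inf_assoc,
      E02, hW3, union, finrank_coord]; decide
  have c123 : (finrank ℂ ↥(⨅ i ∈ ({1, 2, 3} : Finset (Fin 4)), W i) : ℤ) = 0 := by
    rw [Finset.iInf_insert, Finset.iInf_insert, Finset.iInf_singleton, hW1, hW2, hW3,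
      union, union, finrank_coord]; decide
  have c0123 : (finrank ℂ ↥(⨅ i ∈ ({0, 1, 2, 3} : Finset (Fin 4)), W i) : ℤ) = 0 := by
    rw [Finset.iInf_insert, Finset.iInf_insert, Finset.iInf_insert, Finset.iInf_singleton,
      show W 0 ⊓ (W 1 ⊓ (W 2 ⊓ W 3)) = (W 0 ⊓ W 1) ⊓ (W 2 ⊓ W 3) from (inf_assoc _ _ _).symm,
      E01, hW2, hW3, union, union, finrank_coord]; decide
  rw [show (Finset.univ : Finset (Finset (Fin 4))) =
    {∅, {0}, {1}, {2}, {3}, {0,1}, {0,2}, {0,3}, {1,2}, {1,3}, {2,3},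
     {0,1,2}, {0,1,3}, {0,2,3}, {1,2,3}, {0,1,2,3}} from by decide]
  rw [Finset.sum_insert (by decide), Finset.sum_insert (by decide),
    Finset.sum_insert (by decide), Finset.sum_insert (by decide),
    Finset.sum_insert (by decide), Finset.sum_insert (by decide),
    Finset.sum_insert (by decide), Finset.sum_insert (by decide),
    Finset.sum_insert (by decide), Finset.sum_insert (by decide),
    Finset.sum_insert (by decide), Finset.sum_insert (by decide),
    Finset.sum_insert (by decide), Finset.sum_insert (by decide),
    Finset.sum_insert (by decide), Finset.sum_singleton]
  rw [c_e, c0, c1, c2, c3, c01, c02, c03, c12, c13, c23, c012, c013, c023, c123, c0123]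
  decide
end
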